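/- Let V ⊆ ℝ² be open, let g : V → ℝ^N be a smooth immersion, let Z be a smooth vector field on V with α_g(x)(Z x, Z x) = 0 for every x, and let h : V → ℝ^N be a smooth map with range Dh(x) ⊆ N_x g for every x. Then for every x ∈ V, the directional derivative at x in the direction Z(x) of the map y ↦ Dh(y)(Z(y)) is orthogonal to the tangent space T_x g = range Dg(x). -/

import Mathlib

noncomputable section

open scoped RealInnerProductSpace
open Module Set

/-- Euclidean space ℝ^k. -/
abbrev Euc (k : ℕ) : Type := EuclideanSpace ℝ (Fin k)

variable {E : Type*} [NormedAddCommGroup E] [NormedSpace ℝ E] {m : ℕ}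

/-- Tangent space of an immersion at a point: range of the differential. -/
def TangentSp (f : E → Euc m) (x : E) : Submodule ℝ (Euc m) :=
  LinearMap.range (fderiv ℝ f x).toLinearMap

/-- Normal space: orthogonal complement of the tangent space. -/
def NormalSp (f : E → Euc m) (x : E) : Submodule ℝ (Euc m) := (TangentSp f x)ᗮ

/-- Orthogonal projection of the ambient space onto the normal space. -/
def normalProj (f : E → Euc m) (x : E) : Euc m →L[ℝ] Euc m :=
  (NormalSp f x).subtypeL.comp (Submodule.orthogonalProjectionOnto (NormalSp f x))

/-- Orthogonal projection of the ambient space onto the tangent space. -/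
def tangentProj (f : E → Euc m) (x : E) : Euc m →L[ℝ] Euc m :=
  (TangentSp f x).subtypeL.comp (Submodule.orthogonalProjectionOnto (TangentSp f x))

/-- The second fundamental form as a continuous linear operator in the first variable,
with second argument `Y` fixed. -/
def sffOp (f : E → Euc m) (x : E) (Y : E) : E →L[ℝ] Euc m :=
  (normalProj f x).comp (fderiv ℝ (fun y => fderiv ℝ f y Y) x)

/-- The second fundamental form `α_f(x)(X,Y)`: normal component of the second derivative. -/
def sff (f : E → Euc m) (x : E) (X Y : E) : Euc m := sffOp f x Y X

/-- Relative nullity subspace `Δ_f(x) = {X : α_f(x)(X,Y)=0 for all Y}`. -/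
def relNullity (f : E → Euc m) (x : E) : Submodule ℝ E :=
  ⨅ Y : E, LinearMap.ker (sffOp f x Y).toLinearMap

/-- `f` is a smooth immersion on `U`. -/
def IsImmersionOn (f : E → Euc m) (U : Set E) : Prop :=
  ContDiffOn ℝ (⊤ : ℕ∞) f U ∧ ∀ x ∈ U, Function.Injective (fderiv ℝ f x)

/-- `f` and `g` induce the same metric on `U`. -/
def SameMetricOn {m' : ℕ} (f : E → Euc m) (g : E → Euc m') (U : Set E) : Prop :=
  ∀ x ∈ U, ∀ X Y : E,
    ⟪fderiv ℝ f x X, fderiv ℝ f x Y⟫ = ⟪fderiv ℝ g x X, fderiv ℝ g x Y⟫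

/-- First normal space: span of the values of the second fundamental form. -/
def FirstNormal (f : E → Euc m) (x : E) : Submodule ℝ (Euc m) :=
  Submodule.span ℝ {v | ∃ X Y : E, v = sff f x X Y}

/-- `f` has rank two: the relative nullity has codimension two everywhere on `U`. -/
def HasRankTwo (f : E → Euc m) (U : Set E) : Prop :=
  ∀ x ∈ U, finrank ℝ (relNullity f x) = finrank ℝ E - 2

/-- A parabolic submanifold: rank two, first normal space equal to the normal space,
and a nowhere-vanishing smooth asymptotic vector field orthogonal to the relative nullity. -/
def IsParabolic (f : E → Euc m) (U : Set E) : Prop :=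
  IsImmersionOn f U ∧ HasRankTwo f U ∧
  (∀ x ∈ U, FirstNormal f x = NormalSp f x) ∧
  ∃ Z : E → E, ContDiffOn ℝ (⊤ : ℕ∞) Z U ∧ (∀ x ∈ U, Z x ≠ 0) ∧
    (∀ x ∈ U, ∀ T ∈ relNullity f x, ⟪fderiv ℝ f x (Z x), fderiv ℝ f x T⟫ = 0) ∧
    (∀ x ∈ U, sff f x (Z x) (Z x) = 0)

/-- `F` is ruled on `V`: there is a smooth corank-one distribution whose leaves are
mapped into affine subspaces. -/
def IsRuledOn (F : E → Euc m) (V : Set E) : Prop :=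
  ∃ D : E → Submodule ℝ E,
    (∀ x ∈ V, finrank ℝ (D x) = finrank ℝ E - 1) ∧
    (∀ x ∈ V, ∃ W : Set E, IsOpen W ∧ x ∈ W ∧ W ⊆ V ∧
      ∃ v : Fin (finrank ℝ E - 1) → E → E,
        (∀ i, ContDiffOn ℝ (⊤ : ℕ∞) (v i) W) ∧
        ∀ y ∈ W, D y = Submodule.span ℝ (Set.range fun i => v i y)) ∧
    (∀ S T : E → E, ContDiffOn ℝ (⊤ : ℕ∞) S V → ContDiffOn ℝ (⊤ : ℕ∞) T V →
      (∀ y ∈ V, S y ∈ D y) → (∀ y ∈ V, T y ∈ D y) →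
      ∀ x ∈ V, fderiv ℝ (fun y => fderiv ℝ F y (T y)) x (S x) ∈
        (D x).map (fderiv ℝ F x).toLinearMap)

/-- A two-dimensional immersed surface contained in the subspace `W`. -/
def IsImmersedSurfaceIn (S : Set (Euc m)) (W : Submodule ℝ (Euc m)) : Prop :=
  ∃ (O : Set (Euc 2)) (σ : Euc 2 → Euc m), IsOpen O ∧ ContDiffOn ℝ (⊤ : ℕ∞) σ O ∧
    (∀ x ∈ O, Function.Injective (fderiv ℝ σ x)) ∧ (∀ x ∈ O, σ x ∈ W) ∧ S = σ '' O

/-- `f` is surface-like on `V`. -/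
def SurfaceLikeOn {n : ℕ} (f : Euc n → Euc m) (V : Set (Euc n)) : Prop :=
  (∃ (W : Submodule ℝ (Euc m)) (p : Euc m) (S : Set (Euc m)),
      finrank ℝ W = 4 ∧ IsImmersedSurfaceIn S W ∧
      ∀ x ∈ V, ∃ s ∈ S, ∃ w ∈ Wᗮ, f x = p + s + w)
  ∨ (∃ (W : Submodule ℝ (Euc m)) (p : Euc m) (S : Set (Euc m)),
      finrank ℝ W = 5 ∧ IsImmersedSurfaceIn S W ∧ (∀ s ∈ S, ‖s‖ = 1) ∧
      ∀ x ∈ V, ∃ t : ℝ, 0 < t ∧ ∃ s ∈ S, ∃ w ∈ Wᗮ, f x = p + t • s + w)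

/-- `f` and `g` are congruent on `U` by a rigid motion of the ambient space. -/
def CongruentOn {n : ℕ} (f g : Euc n → Euc m) (U : Set (Euc n)) : Prop :=
  ∃ (A : Euc m ≃ₗᵢ[ℝ] Euc m) (v : Euc m), ∀ x ∈ U, g x = A (f x) + v

/-- If `Z` is an asymptotic field of an immersed surface `g` and `h`
has normal-valued differential, then `∂_Z (h_* Z)` is orthogonal to the tangent spaces
of `g`: the identity `(∇̃_Z h_*(Z))_{TL} = 0`. -/
theorem derivative_of_normal_map_along_asymptotic_is_normal
    {N : ℕ} (V : Set (Euc 2)) (hVo : IsOpen V)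
    (g : Euc 2 → Euc N) (hg : IsImmersionOn g V)
    (Z : Euc 2 → Euc 2) (hZs : ContDiffOn ℝ (⊤ : ℕ∞) Z V)
    (hZa : ∀ x ∈ V, sff g x (Z x) (Z x) = 0)
    (h : Euc 2 → Euc N) (hh : ContDiffOn ℝ (⊤ : ℕ∞) h V)
    (hhn : ∀ x ∈ V, ∀ X : Euc 2, fderiv ℝ h x X ∈ NormalSp g x) :
    ∀ x ∈ V, fderiv ℝ (fun y => fderiv ℝ h y (Z y)) x (Z x) ∈ NormalSp g x := by
  intro x hx
  have hmem : V ∈ nhds x := hVo.mem_nhds hx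
  -- smoothness at x
  have hhx : ContDiffAt ℝ (⊤ : ℕ∞) h x := hh.contDiffAt hmem
  have hgx : ContDiffAt ℝ (⊤ : ℕ∞) g x := hg.1.contDiffAt hmem
  have hZx : ContDiffAt ℝ (⊤ : ℕ∞) Z x := hZs.contDiffAt hmem
  have hDh : ContDiffAt ℝ (1 : ℕ∞) (fderiv ℝ h) x := hhx.fderiv_right (by exact_mod_cast (le_top : (1:ℕ∞)+1 ≤ ⊤))
  have hDg : ContDiffAt ℝ (1 : ℕ∞) (fderiv ℝ g) x := hgx.fderiv_right (by exact_mod_cast (le_top : (1:ℕ∞)+1 ≤ ⊤))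
  have hDh' : DifferentiableAt ℝ (fderiv ℝ h) x := hDh.differentiableAt (by norm_num)
  have hDg' : DifferentiableAt ℝ (fderiv ℝ g) x := hDg.differentiableAt (by norm_num)
  have hZ' : DifferentiableAt ℝ Z x := hZx.differentiableAt (by simp)
  set S := fderiv ℝ (fderiv ℝ h) x with hS
  set Sg := fderiv ℝ (fderiv ℝ g) x with hSg
  have symh : ∀ v w : Euc 2, S v w = S w v := by
    intro v w
    exact (hhx.isSymmSndFDerivAt (by rw [minSmoothness_of_isRCLikeNormedField]; exact WithTop.coe_le_coe.2 (le_top : (2:ℕ∞) ≤ ⊤))).eq v w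
  have symg : ∀ v w : Euc 2, Sg v w = Sg w v := by
    intro v w
    exact (hgx.isSymmSndFDerivAt (by rw [minSmoothness_of_isRCLikeNormedField]; exact WithTop.coe_le_coe.2 (le_top : (2:ℕ∞) ≤ ⊤))).eq v w
  -- derivative of `y ↦ fderiv f y a` is `w ↦ (fderiv (fderiv f) x w) a`
  have fd_apply : ∀ (f : Euc 2 → Euc N), DifferentiableAt ℝ (fderiv ℝ f) x →
      ∀ a : Euc 2, fderiv ℝ (fun y => fderiv ℝ f y a) x
        = (fderiv ℝ (fderiv ℝ f) x).flip a := by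
    intro f hf a
    rw [fderiv_clm_apply hf (differentiableAt_const a)]
    ext w
    simp
  -- key identity from differentiating the vanishing inner product
  have key : ∀ a b w : Euc 2,
      ⟪fderiv ℝ h x a, Sg w b⟫ + ⟪S w a, fderiv ℝ g x b⟫ = 0 := by
    intro a b w
    have hfa : DifferentiableAt ℝ (fun y => fderiv ℝ h y a) x :=
      hDh'.clm_apply (differentiableAt_const a)
    have hgb : DifferentiableAt ℝ (fun y => fderiv ℝ g y b) x :=
      hDg'.clm_apply (differentiableAt_const b)
    have hzero : (fun y => ⟪fderiv ℝ h y a, fderiv ℝ g y b⟫)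
        =ᶠ[nhds x] (fun _ => (0 : ℝ)) := by
      filter_upwards [hmem] with y hy
      have h1 : fderiv ℝ h y a ∈ NormalSp g y := hhn y hy a
      have h2 : fderiv ℝ g y b ∈ TangentSp g y := LinearMap.mem_range.2 ⟨b, rfl⟩
      have := (Submodule.mem_orthogonal _ _).1 h1 _ h2
      rw [real_inner_comm] at this
      exact this
    have hderiv0 : fderiv ℝ (fun y => ⟪fderiv ℝ h y a, fderiv ℝ g y b⟫) x = 0 := by
      rw [hzero.fderiv_eq]; exact fderiv_const_apply 0
    have := fderiv_inner_apply (𝕜 := ℝ) hfa hgb w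
    rw [hderiv0] at this
    rw [fd_apply h hDh' a, fd_apply g hDg' b] at this
    simpa using this.symm
  -- the asymptotic condition: `Sg (Z x) (Z x)` is tangent
  have htan : Sg (Z x) (Z x) ∈ TangentSp g x := by
    have h0 := hZa x hx
    rw [sff, sffOp] at h0
    simp only [ContinuousLinearMap.comp_apply] at h0
    rw [fd_apply g hDg' (Z x)] at h0
    have h0' : normalProj g x (Sg (Z x) (Z x)) = 0 := by
      simpa [ContinuousLinearMap.flip_apply] using h0
    rw [normalProj] at h0'
    change ((Submodule.orthogonalProjectionOnto (NormalSp g x)) (Sg (Z x) (Z x)) : Euc N) = 0 at h0'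
    have : Submodule.orthogonalProjectionOnto (NormalSp g x) (Sg (Z x) (Z x)) = 0 :=
      Subtype.ext (by simpa using h0')
    have hmemo := Submodule.orthogonalProjectionOnto_eq_zero_iff.1 this
    rw [NormalSp] at hmemo
    rwa [Submodule.orthogonal_orthogonal] at hmemo
  have hnorm_inner : ∀ a : Euc 2, ∀ v ∈ TangentSp g x, ⟪fderiv ℝ h x a, v⟫ = 0 := by
    intro a v hv
    have := (Submodule.mem_orthogonal _ _).1 (hhn x hx a) _ hv
    rw [real_inner_comm] at this
    exact this
  -- step 1
  have h1 : ⟪S (Z x) (Z x), fderiv ℝ g x (Z x)⟫ = (0 : ℝ) → True := fun _ => trivial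
  have step1 : ∀ Y : Euc 2, ⟪S (Z x) Y, fderiv ℝ g x (Z x)⟫ = 0 := by
    intro Y
    have := key Y (Z x) (Z x)
    have hz : ⟪fderiv ℝ h x Y, Sg (Z x) (Z x)⟫ = 0 := hnorm_inner Y _ htan
    linarith [this, hz]
  -- main computation: the second-derivative term is orthogonal to each tangent vector
  have main : ∀ Y : Euc 2, ⟪S (Z x) (Z x), fderiv ℝ g x Y⟫ = 0 := by
    intro Y
    have k3 := key (Z x) Y (Z x)
    have k2 := key (Z x) (Z x) Y
    have e1 : Sg (Z x) Y = Sg Y (Z x) := symg _ _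
    have e2 : S Y (Z x) = S (Z x) Y := symh _ _
    have s1 := step1 Y
    rw [e1] at k3
    rw [e2] at k2
    linarith [k3, k2, s1]
  -- decompose the target derivative
  have hdecomp : fderiv ℝ (fun y => fderiv ℝ h y (Z y)) x (Z x)
      = fderiv ℝ h x (fderiv ℝ Z x (Z x)) + S (Z x) (Z x) := by
    rw [fderiv_clm_apply hDh' hZ']
    simp
    rfl
  rw [NormalSp, Submodule.mem_orthogonal]
  intro u hu
  obtain ⟨Y, rfl⟩ := LinearMap.mem_range.1 hu
  have t1 : ⟪fderiv ℝ h x (fderiv ℝ Z x (Z x)), fderiv ℝ g x Y⟫ = 0 :=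
    hnorm_inner _ _ (LinearMap.mem_range.2 ⟨Y, rfl⟩)
  have t2 := main Y
  have hfin : ⟪fderiv ℝ (fun y => fderiv ℝ h y (Z y)) x (Z x), fderiv ℝ g x Y⟫ = (0 : ℝ) := by
    rw [hdecomp, inner_add_left, t1, t2]
    norm_num
  rw [real_inner_comm] at hfin
  simpa using hfin


end
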